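/- Consider the MVNP-to-WSP reduction construction: replace the sink t of G by, for each predecessor v of t lying on an s–t path of cost < h, a set U_v of |V| leaf vertices, each connected from v by an arc of cost t_{vt}. Let S ⊆ V \ {s,t} with |S| ≤ k be such that d_{G\S}(s,t) ≥ h. Then in the constructed graph, for the allocation protecting exactly S with delay Δ = h, every leaf vertex u in ∪_v U_v has delayed arrival time at least h. -/
import Mathlib


open scoped ENNReal

/-- `l` is a directed path from `u` to `v` along arc relation `A`. -/
def IsPathFrom {V : Type*} (A : V → V → Prop) (u v : V) (l : List V) : Prop :=
  l.head? = some u ∧ l.getLast? = some v ∧ l.Chain' A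

/-- Total cost of a path: sum of arc costs over consecutive pairs. -/
def pathCost {V : Type*} (c : V → V → ℝ) (l : List V) : ℝ :=
  ((l.zip l.tail).map fun p => c p.1 p.2).sum

/-- Shortest-path distance from `u` to `v` (infimum of path costs, `⊤` if unreachable). -/
noncomputable def gdist {V : Type*} (A : V → V → Prop) (c : V → V → ℝ) (u v : V) : ℝ≥0∞ :=
  ⨅ l : {l : List V // IsPathFrom A u v l}, ENNReal.ofReal (pathCost c l)

open Classical in
/-- Arc costs after protecting the vertices of `P`: every outgoing arc of a
protected vertex is delayed by `Δ`. -/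
noncomputable def delCost {V : Type*} (c : V → V → ℝ) (P : Set V) (Δ : ℝ) : V → V → ℝ :=
  fun u v => c u v + (if u ∈ P then Δ else 0)

/-- Arc relation of the graph `Ĝ` of the MVNP-to-WSP reduction: the sink `t` is
replaced, for each predecessor `v` of `t` lying on an `s`–`t` path of cost `< h`,
by `|V|` leaf vertices `Sum.inr (v, i)` (`i : V`), each reached from `v` by an arc
of cost `t_{vt}`. -/
noncomputable def hatArc {V : Type*} (A : V → V → Prop) (c : V → V → ℝ)
    (s tv : V) (h : ℝ) : (V ⊕ V × V) → (V ⊕ V × V) → Prop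
  | Sum.inl x, Sum.inl y => A x y ∧ x ≠ tv ∧ y ≠ tv
  | Sum.inl x, Sum.inr q =>
      x = q.1 ∧ A q.1 tv ∧ gdist A c s q.1 + ENNReal.ofReal (c q.1 tv) < ENNReal.ofReal h
  | _, _ => False

/-- Arc costs of the reduction graph `Ĝ`. -/
noncomputable def hatCost {V : Type*} (c : V → V → ℝ) (tv : V) :
    (V ⊕ V × V) → (V ⊕ V × V) → ℝ
  | Sum.inl x, Sum.inl y => c x y
  | Sum.inl x, Sum.inr _ => c x tv
  | _, _ => 0

lemma pathCost_single {V : Type*} (c : V → V → ℝ) (a : V) : pathCost c [a] = 0 := by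
  simp [pathCost]

lemma pathCost_cons_cons {V : Type*} (c : V → V → ℝ) (a b : V) (l : List V) :
    pathCost c (a :: b :: l) = c a b + pathCost c (b :: l) := by
  simp [pathCost]

lemma pathCost_nonneg {V : Type*} {R : V → V → Prop} {c : V → V → ℝ}
    (hc : ∀ a b, R a b → 0 ≤ c a b) :
    ∀ l : List V, l.Chain' R → 0 ≤ pathCost c l
  | [], _ => by simp [pathCost]
  | [a], _ => by simp [pathCost]
  | a :: b :: l, hch => by
      rw [pathCost_cons_cons]
      have h1 : R a b := (List.isChain_cons_cons.mp hch).1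
      have h2 := pathCost_nonneg hc (b :: l) (List.isChain_cons_cons.mp hch).2
      have h3 := hc a b h1
      linarith

lemma key {V : Type*} {A : V → V → Prop} {t : V → V → ℝ}
    (hpos : ∀ u v, A u v → 0 < t u v)
    {s tv : V} {h : ℝ} (hh : 0 < h) {S : Set V} (htS : tv ∉ S)
    (l : List (V ⊕ V × V)) :
    ∀ (x : V) (q : V × V),
      l.Chain' (hatArc A t s tv h) →
      l.head? = some (Sum.inl x) → l.getLast? = some (Sum.inr q) →
      h ≤ pathCost (delCost (hatCost t tv) (Sum.inl '' S) h) l ∨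
      ∃ p : List V, IsPathFrom (fun u v => A u v ∧ u ∉ S ∧ v ∉ S) x tv p ∧
        pathCost t p = pathCost (delCost (hatCost t tv) (Sum.inl '' S) h) l := by
  have hc' : ∀ a b, hatArc A t s tv h a b →
      0 ≤ delCost (hatCost t tv) (Sum.inl '' S) h a b := by
    rintro (a | a) (b | b) hab
    · have := hpos _ _ hab.1
      simp only [delCost, hatCost]
      split_ifs <;> linarith
    · obtain ⟨hx, hA, -⟩ := hab
      have := hpos _ _ hA
      subst hx
      simp only [delCost, hatCost]
      split_ifs <;> linarith
    · exact hab.elim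
    · exact hab.elim
  induction l with
  | nil => intro x q _ hhd _; simp at hhd
  | cons a l' ih =>
    intro x q hch hhd hlast
    have hax : a = Sum.inl x := by simpa using hhd
    subst hax
    cases l' with
    | nil => simp at hlast
    | cons b rest =>
      rw [List.getLast?_cons_cons] at hlast
      obtain ⟨hab, hch2⟩ := List.isChain_cons_cons.mp hch
      cases b with
      | inr q' =>
        obtain ⟨hx, hA, -⟩ := hab
        cases rest with
        | cons r rs => exact absurd (List.isChain_cons_cons.mp hch2).1 (fun hf => hf)
        | nil =>
          have hq : q' = q := by simpa using hlast
          subst hq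
          have htx : 0 < t x tv := by subst hx; exact hpos _ _ hA
          by_cases hxS : x ∈ S
          · left
            have hmem : (Sum.inl x : V ⊕ V × V) ∈ Sum.inl '' S := ⟨x, hxS, rfl⟩
            rw [pathCost_cons_cons, pathCost_single]
            simp only [delCost, hatCost, if_pos hmem]
            linarith
          · right
            refine ⟨[x, tv], ⟨rfl, by simp, ?_⟩, ?_⟩
            · subst hx
              exact List.isChain_cons_cons.mpr ⟨⟨hA, hxS, htS⟩, List.isChain_singleton _⟩
            · have hmem : (Sum.inl x : V ⊕ V × V) ∉ Sum.inl '' S := by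
                simp [hxS]
              rw [pathCost_cons_cons, pathCost_single, pathCost_cons_cons, pathCost_single]
              simp [delCost, hatCost, if_neg hmem, pathCost]
      | inl y =>
        obtain ⟨hAxy, hxtv, hytv⟩ := hab
        have hhd2 : (Sum.inl y :: rest).head? = some (Sum.inl y) := rfl
        rcases ih y q hch2 hhd2 hlast with hIH | ⟨p, hp, hcost⟩
        · left
          rw [pathCost_cons_cons]
          have := hc' (Sum.inl x) (Sum.inl y) ⟨hAxy, hxtv, hytv⟩
          linarith
        · by_cases hxS : x ∈ S
          · left
            have hmem : (Sum.inl x : V ⊕ V × V) ∈ Sum.inl '' S := ⟨x, hxS, rfl⟩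
            have hnn : 0 ≤ pathCost t p :=
              pathCost_nonneg (fun a b hab => (hpos a b hab.1).le) p hp.2.2
            rw [pathCost_cons_cons, ← hcost]
            have := hpos _ _ hAxy
            simp only [delCost, hatCost, if_pos hmem]
            linarith
          · right
            obtain ⟨hphd, hplast, hpch⟩ := hp
            cases p with
            | nil => simp at hphd
            | cons py p' =>
              have hpy : py = y := by simpa using hphd
              subst hpy
              cases p' with
              | nil =>
                have : py = tv := by simpa using hplast
                exact absurd this hytv
              | cons z p'' =>
                have hyS : py ∉ S := ((List.isChain_cons_cons.mp hpch).1).2.1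
                refine ⟨x :: py :: z :: p'', ⟨rfl, ?_, ?_⟩, ?_⟩
                · rw [List.getLast?_cons_cons]; exact hplast
                · exact List.isChain_cons_cons.mpr ⟨⟨hAxy, hxS, hyS⟩, hpch⟩
                · have hmem : (Sum.inl x : V ⊕ V × V) ∉ Sum.inl '' S := by
                    simp [hxS]
                  rw [pathCost_cons_cons t x, hcost, pathCost_cons_cons]
                  simp [delCost, hatCost, if_neg hmem]

/-- in the MVNP-to-WSP reduction, if `S ⊆ V \ {s,t}` with `|S| ≤ k`
satisfies `d_{G\S}(s,t) ≥ h`, then protecting `S` with delay `Δ = h` gives every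
leaf vertex a delayed arrival time of at least `h`. -/
theorem reduction_leaves_saved {V : Type*} [Fintype V] (A : V → V → Prop)
    (t : V → V → ℝ) (hpos : ∀ u v, A u v → 0 < t u v)
    (s tv : V) (hstv : s ≠ tv) (h : ℝ) (hh : 0 < h) (k : ℕ)
    (S : Set V) (hs : s ∉ S) (ht : tv ∉ S) (hk : S.ncard ≤ k)
    (hdist : ENNReal.ofReal h ≤ gdist (fun u v => A u v ∧ u ∉ S ∧ v ∉ S) t s tv) :
    ∀ v i : V,
      ENNReal.ofReal h ≤
        gdist (hatArc A t s tv h) (delCost (hatCost t tv) (Sum.inl '' S) h)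
          (Sum.inl s) (Sum.inr (v, i)) := by
  intro v i
  rw [gdist]
  refine le_iInf fun lp => ?_
  obtain ⟨l, hhd, hlast, hch⟩ := lp
  rcases key hpos hh ht l s (v, i) hch hhd hlast with H | ⟨p, hp, hcost⟩
  · exact ENNReal.ofReal_le_ofReal H
  · have h2 : gdist (fun u v => A u v ∧ u ∉ S ∧ v ∉ S) t s tv
        ≤ ENNReal.ofReal (pathCost t p) := by
      rw [gdist]
      exact iInf_le
        (fun lp : {l : List V // IsPathFrom (fun u v => A u v ∧ u ∉ S ∧ v ∉ S) s tv l} =>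
          ENNReal.ofReal (pathCost t lp.1)) ⟨p, hp⟩
    rw [hcost] at h2
    exact hdist.trans h2
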